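/- Let G be a group, H ≤ G a finite-index subgroup, B a left-invariant Boolean algebra on G with H ∈ B, and suppose B is bi-invariant and carries the semigroup operation p∗q = {A ∈ B : {x : x⁻¹A ∈ q} ∈ p} on S(B). Then for types p, q ∈ S(B), the unique left coset of H in p∗q equals the unique left coset of H in p if and only if the unique left coset of H in q is H itself. Moreover, if H is normal in G, then the coset of H in p∗q equals the product (in G/H) of the cosets of H in p and in q. -/
import Mathlib


open Pointwise

/-- `p` is a `B`-type. -/
def IsBType {G : Type*} (B : Set (Set G)) (p : Set (Set G)) : Prop :=
  p ⊆ B ∧ ∅ ∉ p ∧ (∀ A ∈ p, ∀ A' ∈ p, A ∩ A' ∈ p) ∧ ∀ A ∈ B, A ∈ p ∨ Aᶜ ∈ p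

/-- `dp(A) = {x ∈ G : x⁻¹A ∈ p}`. -/
def dSet {G : Type*} [Group G] (p : Set (Set G)) (A : Set G) : Set G :=
  {x : G | x⁻¹ • A ∈ p}

/-- `p ∗ q = {A ∈ B : dq(A) ∈ p}`. -/
def typeStar {G : Type*} [Group G] (B : Set (Set G)) (p q : Set (Set G)) : Set (Set G) :=
  {A | A ∈ B ∧ dSet q A ∈ p}

theorem star_cosets {G : Type*} [Group G] (B : Set (Set G))
    (huniv : Set.univ ∈ B) (hcompl : ∀ A ∈ B, Aᶜ ∈ B)
    (hinter : ∀ A ∈ B, ∀ A' ∈ B, A ∩ A' ∈ B)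
    (hlinv : ∀ (g : G), ∀ A ∈ B, g • A ∈ B)
    (hrinv : ∀ A ∈ B, ∀ g : G, (fun a => a * g) '' A ∈ B)
    (hd : ∀ (p : Set (Set G)), IsBType B p → ∀ A ∈ B, dSet p A ∈ B)
    (H : Subgroup G) (hHfi : H.index ≠ 0) (hHB : (H : Set G) ∈ B)
    (p q : Set (Set G)) (hp : IsBType B p) (hq : IsBType B q)
    (a b : G) (ha : a • (H : Set G) ∈ p) (hb : b • (H : Set G) ∈ q) :
    (a • (H : Set G) ∈ typeStar B p q ↔ b ∈ H) ∧
      (H.Normal → (a * b) • (H : Set G) ∈ typeStar B p q) := by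
  obtain ⟨hqB, hqne, hqint, hqtot⟩ := hq
  obtain ⟨hpB, hpne, hpint, hptot⟩ := hp
  -- uniqueness of the coset in q
  have huniq : ∀ c : G, c • (H : Set G) ∈ q ↔ c⁻¹ * b ∈ H := by
    intro c
    constructor
    · intro hc
      have hint := hqint _ hc _ hb
      have hne : (c • (H : Set G) ∩ b • (H : Set G)).Nonempty := by
        rcases Set.eq_empty_or_nonempty (c • (H : Set G) ∩ b • (H : Set G)) with h | h
        · exact absurd (h ▸ hint) hqne
        · exact h
      obtain ⟨x, hx1, hx2⟩ := hne
      rw [mem_leftCoset_iff] at hx1 hx2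
      have : c⁻¹ * b = (c⁻¹ * x) * (b⁻¹ * x)⁻¹ := by group
      rw [this]
      exact H.mul_mem hx1 (H.inv_mem hx2)
    · intro hcb
      rwa [(leftCoset_eq_iff H).2 hcb]
  -- computation of dSet q (c • H)
  have hdset : ∀ c : G, dSet q (c • (H : Set G)) = (fun y => y * b⁻¹) '' (c • (H : Set G)) := by
    intro c
    ext x
    simp only [dSet, Set.mem_setOf_eq, smul_smul, huniq, Set.mem_image]
    constructor
    · intro hx
      refine ⟨x * b, ?_, by group⟩
      rw [mem_leftCoset_iff]
      have e : c⁻¹ * (x * b) = (x⁻¹ * c)⁻¹ * b := by group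
      rw [e]; exact hx
    · rintro ⟨y, hy, rfl⟩
      rw [mem_leftCoset_iff] at hy
      have e : ((y * b⁻¹)⁻¹ * c)⁻¹ * b = c⁻¹ * y := by group
      rw [e]; exact hy
  constructor
  · constructor
    · rintro ⟨-, hap⟩
      rw [hdset a] at hap
      have hint := hpint _ ha _ hap
      have hne : (a • (H : Set G) ∩ (fun y => y * b⁻¹) '' (a • (H : Set G))).Nonempty := by
        rcases Set.eq_empty_or_nonempty
            (a • (H : Set G) ∩ (fun y => y * b⁻¹) '' (a • (H : Set G))) with h | h
        · exact absurd (h ▸ hint) hpne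
        · exact h
      obtain ⟨x, hx1, ⟨y, hy, hyx⟩⟩ := hne
      rw [mem_leftCoset_iff] at hx1 hy
      have : b = (a⁻¹ * x)⁻¹ * (a⁻¹ * y) := by rw [← hyx]; group
      rw [this]
      exact H.mul_mem (H.inv_mem hx1) hy
    · intro hbH
      refine ⟨hlinv a _ hHB, ?_⟩
      rw [hdset a]
      have : (fun y => y * b⁻¹) '' (a • (H : Set G)) = a • (H : Set G) := by
        ext x
        simp only [Set.mem_image, mem_leftCoset_iff]
        constructor
        · rintro ⟨y, hy, rfl⟩
          have : a⁻¹ * (y * b⁻¹) = (a⁻¹ * y) * b⁻¹ := by group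
          rw [this]
          exact H.mul_mem hy (H.inv_mem hbH)
        · intro hx
          refine ⟨x * b, ?_, by group⟩
          have : a⁻¹ * (x * b) = (a⁻¹ * x) * b := by group
          rw [this]
          exact H.mul_mem hx hbH
      rwa [this]
  · intro hN
    refine ⟨hlinv (a * b) _ hHB, ?_⟩
    rw [hdset (a * b)]
    have : (fun y => y * b⁻¹) '' ((a * b) • (H : Set G)) = a • (H : Set G) := by
      ext x
      simp only [Set.mem_image, mem_leftCoset_iff]
      constructor
      · rintro ⟨y, hy, rfl⟩
        have : a⁻¹ * (y * b⁻¹) = b * ((a * b)⁻¹ * y) * b⁻¹ := by group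
        rw [this]
        exact hN.conj_mem _ hy b
      · intro hx
        refine ⟨x * b * b⁻¹ * b, ?_, by group⟩
        have : (a * b)⁻¹ * (x * b * b⁻¹ * b) = b⁻¹ * (a⁻¹ * x) * b⁻¹⁻¹ := by group
        rw [this]
        exact hN.conj_mem _ hx b⁻¹
    rwa [this]
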